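/- Let f be a probability density on ℝ^d, let f*(x) := sup_{r>0} (∫_{B(x,r)} f(y) dy)/(V_d r^d) be its Hardy–Littlewood maximal function, and let H be a fixed finite connected graph on v ≥ 2 vertices labelled 1,...,v with edge set E_H. Let X_1,...,X_v be independent random vectors with density f, and let r > 0. Then E[∏_{(i,j)∈E_H} 1{‖X_i − X_j‖ ≤ r}] ≤ (V_d (v−1)^d r^d)^{v−1} · ∫ (f*)^v; in particular, if ∫ (f*)^v < ∞ this expectation is O(r^{d(v−1)}) as r ↓ 0. -/
import Mathlib


open MeasureTheory Metric Filter

noncomputable section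

abbrev Euc (d : ℕ) := EuclideanSpace ℝ (Fin d)

/-- `V_d`: the Lebesgue volume of the unit ball in ℝ^d. -/
def unitBallVol (d : ℕ) : ℝ := (volume (closedBall (0 : Euc d) 1)).toReal

/-- The measure on ℝ^d with density `f` w.r.t. Lebesgue measure. -/
def densityMeasure {d : ℕ} (f : Euc d → ℝ) : Measure (Euc d) :=
  volume.withDensity fun x => ENNReal.ofReal (f x)

/-- The Hardy–Littlewood maximal function
`f*(x) = sup_{r > 0} (∫_{B(x,r)} f) / (V_d r^d)` (valued in `ℝ≥0∞`). -/
def maximalFn {d : ℕ} (f : Euc d → ℝ) (x : Euc d) : ENNReal :=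
  ⨆ (r : ℝ) (_ : 0 < r),
    (∫⁻ y in closedBall x r, ENNReal.ofReal (f y)) / ENNReal.ofReal (unitBallVol d * r ^ d)

lemma unitBallVol_pos (d : ℕ) : 0 < unitBallVol d :=
  ENNReal.toReal_pos (measure_closedBall_pos volume _ one_pos).ne' measure_closedBall_lt_top.ne

lemma volume_closedBall_eq (d : ℕ) (x : Euc d) {s : ℝ} (hs : 0 ≤ s) :
    volume (closedBall x s) = ENNReal.ofReal (unitBallVol d * s ^ d) := by
  rw [ENNReal.ofReal_mul (unitBallVol_pos d).le, unitBallVol,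
    ENNReal.ofReal_toReal measure_closedBall_lt_top.ne,
    Measure.addHaar_closedBall' volume x hs]
  simp only [finrank_euclideanSpace_fin]
  ring

lemma setLintegral_le_maximalFn {d : ℕ} (f : Euc d → ℝ) (x : Euc d) {s : ℝ} (hs : 0 < s) :
    (∫⁻ y in closedBall x s, ENNReal.ofReal (f y)) ≤
      maximalFn f x * ENNReal.ofReal (unitBallVol d * s ^ d) := by
  have h0 : ENNReal.ofReal (unitBallVol d * s ^ d) ≠ 0 := by
    simp only [ne_eq, ENNReal.ofReal_eq_zero, not_le]
    exact mul_pos (unitBallVol_pos d) (pow_pos hs d)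
  have hle : (∫⁻ y in closedBall x s, ENNReal.ofReal (f y)) /
      ENNReal.ofReal (unitBallVol d * s ^ d) ≤ maximalFn f x :=
    le_iSup₂ (f := fun r (_ : 0 < r) => (∫⁻ y in closedBall x r, ENNReal.ofReal (f y)) /
      ENNReal.ofReal (unitBallVol d * r ^ d)) s hs
  rwa [ENNReal.div_le_iff h0 ENNReal.ofReal_ne_top] at hle

lemma ae_ofReal_le_maximalFn {d : ℕ} (f : Euc d → ℝ) (hmeas : Measurable f)
    (hint : ∫⁻ x, ENNReal.ofReal (f x) = 1) :
    ∀ᵐ x, ENNReal.ofReal (f x) ≤ maximalFn f x := by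
  have h'f : (∫⁻ y, ENNReal.ofReal (f y)) ≠ ⊤ := by
    rw [hint]; exact ENNReal.one_ne_top
  filter_upwards [(Besicovitch.vitaliFamily (volume : Measure (Euc d))).ae_tendsto_lintegral_div'
      hmeas.ennreal_ofReal h'f] with x hx
  have hx' := hx.comp (Besicovitch.tendsto_filterAt (volume : Measure (Euc d)) x)
  refine le_of_tendsto hx' ?_
  filter_upwards [self_mem_nhdsWithin] with s hs
  have hs' : (0 : ℝ) < s := hs
  have hvol : volume (closedBall x s) = ENNReal.ofReal (unitBallVol d * s ^ d) :=
    volume_closedBall_eq d x hs'.le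
  show (∫⁻ y in closedBall x s, ENNReal.ofReal (f y)) / volume (closedBall x s) ≤ maximalFn f x
  rw [hvol]
  exact le_iSup₂ (f := fun r (_ : 0 < r) => (∫⁻ y in closedBall x r, ENNReal.ofReal (f y)) /
    ENNReal.ofReal (unitBallVol d * r ^ d)) s hs'

lemma walk_dist_le {d v : ℕ} {H : SimpleGraph (Fin v)} {x : Fin v → Euc d} {r : ℝ}
    (hx : ∀ i j, H.Adj i j → dist (x i) (x j) ≤ r) {i j : Fin v} (w : H.Walk i j) :
    dist (x i) (x j) ≤ w.length * r := by
  induction w with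
  | nil => simp
  | @cons a b c h p ih =>
      have h1 := hx a b h
      have h2 := dist_triangle (x a) (x b) (x c)
      rw [SimpleGraph.Walk.length_cons]
      push_cast
      linarith

/-- Let `H` be a fixed finite connected graph on `v ≥ 2` vertices, let `X_1, …, X_v` be
independent with density `f`, and let `r > 0`. Then
`E[∏_{(i,j) ∈ E_H} 1{‖X_i − X_j‖ ≤ r}] ≤ (V_d (v−1)^d r^d)^{v−1} ∫ (f*)^v`. -/
theorem connected_subgraph_prob_le (d : ℕ) (hd : 1 ≤ d) (f : Euc d → ℝ)
    (hmeas : Measurable f) (hpos : ∀ x, 0 ≤ f x)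
    (hint : ∫⁻ x, ENNReal.ofReal (f x) = 1)
    (v : ℕ) (hv : 2 ≤ v) (H : SimpleGraph (Fin v)) (hH : H.Connected)
    (r : ℝ) (hr : 0 < r) :
    (Measure.pi fun _ : Fin v => densityMeasure f)
        {x | ∀ i j : Fin v, H.Adj i j → dist (x i) (x j) ≤ r} ≤
      ENNReal.ofReal (unitBallVol d * ((v : ℝ) - 1) ^ d * r ^ d) ^ (v - 1) *
        ∫⁻ x, maximalFn f x ^ v := by
  obtain ⟨n, rfl⟩ : ∃ n, v = n + 1 := ⟨v - 1, by omega⟩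
  have hn : 1 ≤ n := by omega
  set μ : Measure (Euc d) := densityMeasure f with hμ
  have hfin : (∫⁻ x, ENNReal.ofReal (f x)) ≠ ⊤ := by rw [hint]; exact ENNReal.one_ne_top
  haveI : IsFiniteMeasure μ := isFiniteMeasure_withDensity hfin
  set R : ℝ := n * r with hRdef
  have hRpos : 0 < R := by
    have : (0 : ℝ) < n := by exact_mod_cast hn
    exact mul_pos this hr
  set C : ENNReal := ENNReal.ofReal (unitBallVol d * R ^ d) with hC
  set e := MeasurableEquiv.piFinSuccAbove (fun _ : Fin (n + 1) => Euc d) 0 with he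
  set A : Set (Euc d × (Fin n → Euc d)) := {p | ∀ j, dist (p.2 j) p.1 ≤ R} with hAdef
  have hA : MeasurableSet A := by
    have : A = ⋂ j, {p : Euc d × (Fin n → Euc d) | dist (p.2 j) p.1 ≤ R} := by
      ext p; simp [hAdef, Set.mem_iInter]
    rw [this]
    refine MeasurableSet.iInter fun j => ?_
    exact measurableSet_le (Continuous.measurable (by fun_prop)) measurable_const
  have hsub : {x : Fin (n + 1) → Euc d | ∀ i j, H.Adj i j → dist (x i) (x j) ≤ r} ⊆ e ⁻¹' A := by
    intro x hx
    have key : ∀ i : Fin (n + 1), dist (x i) (x 0) ≤ R := by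
      intro i
      obtain ⟨w⟩ := hH.preconnected i 0
      have hlen : (w.toPath : H.Walk i 0).length < Fintype.card (Fin (n + 1)) :=
        (w.toPath).2.length_lt
      have hlen' : ((w.toPath : H.Walk i 0).length : ℝ) ≤ n := by
        rw [Fintype.card_fin] at hlen
        exact_mod_cast Nat.lt_succ_iff.mp hlen
      calc dist (x i) (x 0) ≤ ((w.toPath : H.Walk i 0).length : ℝ) * r :=
            walk_dist_le hx _
        _ ≤ (n : ℝ) * r := mul_le_mul_of_nonneg_right hlen' hr.le
    intro j
    show dist ((e x).2 j) ((e x).1) ≤ R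
    have : (e x).1 = x 0 ∧ (e x).2 j = x (Fin.succAbove 0 j) := by
      constructor <;> simp [he, MeasurableEquiv.piFinSuccAbove, Fin.removeNth, Fin.tail]
    rw [this.1, this.2]
    exact key _
  calc (Measure.pi fun _ : Fin (n + 1) => μ)
        {x | ∀ i j, H.Adj i j → dist (x i) (x j) ≤ r}
      ≤ (Measure.pi fun _ : Fin (n + 1) => μ) (e ⁻¹' A) := measure_mono hsub
    _ = ((μ.prod (Measure.pi fun _ : Fin n => μ))) A :=
        (measurePreserving_piFinSuccAbove (fun _ : Fin (n + 1) => μ) 0).measure_preimage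
          hA.nullMeasurableSet
    _ = ∫⁻ x, (Measure.pi fun _ : Fin n => μ) (Prod.mk x ⁻¹' A) ∂μ := Measure.prod_apply hA
    _ = ∫⁻ x, μ (closedBall x R) ^ n ∂μ := by
        refine lintegral_congr fun x => ?_
        have hslice : Prod.mk x ⁻¹' A = Set.pi Set.univ (fun _ : Fin n => closedBall x R) := by
          ext y; simp [hAdef, Set.mem_pi, mem_closedBall]
        rw [hslice, Measure.pi_pi]
        simp
    _ ≤ ∫⁻ x, (maximalFn f x * C) ^ n ∂μ := by
        refine lintegral_mono fun x => ?_
        gcongr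
        rw [hμ, densityMeasure, withDensity_apply _ measurableSet_closedBall]
        exact setLintegral_le_maximalFn f x hRpos
    _ = ∫⁻ x, ENNReal.ofReal (f x) * (maximalFn f x * C) ^ n := by
        rw [hμ, densityMeasure, lintegral_withDensity_eq_lintegral_mul_non_measurable _
          hmeas.ennreal_ofReal (ae_of_all _ fun x => ENNReal.ofReal_lt_top)]
        rfl
    _ ≤ ∫⁻ x, C ^ n * maximalFn f x ^ (n + 1) := by
        refine lintegral_mono_ae ?_
        filter_upwards [ae_ofReal_le_maximalFn f hmeas hint] with x hx
        calc ENNReal.ofReal (f x) * (maximalFn f x * C) ^ n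
            = C ^ n * (ENNReal.ofReal (f x) * maximalFn f x ^ n) := by ring
          _ ≤ C ^ n * (maximalFn f x * maximalFn f x ^ n) := by gcongr
          _ = C ^ n * maximalFn f x ^ (n + 1) := by ring
    _ = C ^ n * ∫⁻ x, maximalFn f x ^ (n + 1) :=
        lintegral_const_mul' _ _ (ENNReal.pow_ne_top ENNReal.ofReal_ne_top)
    _ = ENNReal.ofReal (unitBallVol d * ((((n : ℕ) + 1 : ℕ) : ℝ) - 1) ^ d * r ^ d) ^ (n + 1 - 1) *
          ∫⁻ x, maximalFn f x ^ (n + 1) := by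
        congr 2
        rw [hC, hRdef]
        push_cast
        ring

end
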